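/- arXiv:1812.00850 — 3 statements merged into one kernel-verified Lean document; each statement's English description precedes it below -/
import Mathlib

section
/- (Necessity of A_p for the maximal function.) Let d ≥ 1, 1 < p < ∞, and let w be a weight on ℝ^d. Suppose there is a constant C > 0 such that ‖Mf‖_{L^p(w)} ≤ C‖f‖_{L^p(w)} for all f ∈ L^p(w). Then w ∈ A_p, and moreover [w]_{A_p} ≤ C^p. -/
open MeasureTheory ENNReal

noncomputable section

/-- An axis-parallel cube in `ℝ^d`. -/
def IsCube {d : ℕ} (Q : Set (Fin d → ℝ)) : Prop :=
  ∃ (a : Fin d → ℝ) (l : ℝ), 0 < l ∧ Q = {x | ∀ i, a i ≤ x i ∧ x i < a i + l}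

/-- The average of `f` over the set `Q` (with respect to Lebesgue measure). -/
def avg {d : ℕ} (Q : Set (Fin d → ℝ)) (f : (Fin d → ℝ) → ℝ) : ℝ :=
  (volume Q).toReal⁻¹ * ∫ x in Q, f x

/-- A weight: locally integrable and a.e. positive. -/
def IsWeight {d : ℕ} (w : (Fin d → ℝ) → ℝ) : Prop :=
  MeasureTheory.LocallyIntegrable w volume ∧
    ∀ᵐ x ∂(volume : Measure (Fin d → ℝ)), 0 < w x

/-- Muckenhoupt `A_p` characteristic of `w`, as a supremum over all axis-parallel cubes. -/
def apConst (d : ℕ) (p : ℝ) (w : (Fin d → ℝ) → ℝ) : ℝ≥0∞ :=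
  ⨆ Q : {Q : Set (Fin d → ℝ) // IsCube Q},
    ENNReal.ofReal (avg Q.1 w * (avg Q.1 fun x => (w x) ^ (-(1/(p-1)))) ^ (p-1))

/-- Weighted `L^p` norm `(∫ |f|^p w)^(1/p)` as an extended nonnegative real. -/
def wLpNorm {d : ℕ} (p : ℝ) (w f : (Fin d → ℝ) → ℝ) : ℝ≥0∞ :=
  (∫⁻ x, ENNReal.ofReal |f x| ^ p * ENNReal.ofReal (w x)) ^ (1/p)

/-- Hardy–Littlewood maximal function over axis-parallel cubes. -/
def maxFn {d : ℕ} (f : (Fin d → ℝ) → ℝ) (x : Fin d → ℝ) : ℝ≥0∞ :=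
  ⨆ Q : {Q : Set (Fin d → ℝ) // IsCube Q ∧ x ∈ Q},
    ENNReal.ofReal (avg Q.1 fun y => |f y|)

/-- The standard dyadic cube of generation `j` indexed by `k`. -/
def dyadicCube (d : ℕ) (j : ℤ) (k : Fin d → ℤ) : Set (Fin d → ℝ) :=
  {x | ∀ i, (k i : ℝ) * (2:ℝ) ^ (-j) ≤ x i ∧ x i < ((k i : ℝ) + 1) * (2:ℝ) ^ (-j)}

/-- The dyadic maximal function over standard dyadic cubes. -/
def dyadicMaxFn {d : ℕ} (f : (Fin d → ℝ) → ℝ) (x : Fin d → ℝ) : ℝ≥0∞ :=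
  ⨆ jk : {jk : ℤ × (Fin d → ℤ) // x ∈ dyadicCube d jk.1 jk.2},
    ENNReal.ofReal (avg (dyadicCube d jk.1.1 jk.1.2) fun y => |f y|)

/-- **Necessity of `A_p` for the maximal function.** If
`‖Mf‖_{L^p(w)} ≤ C ‖f‖_{L^p(w)}` for all `f ∈ L^p(w)`, then `w ∈ A_p` with
`[w]_{A_p} ≤ C^p`. -/
theorem Ap_necessary_for_maximal (d : ℕ) (hd : 1 ≤ d) (p : ℝ) (hp : 1 < p)
    (w : (Fin d → ℝ) → ℝ) (hw : IsWeight w) (C : ℝ) (hC : 0 < C)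
    (hbound : ∀ f : (Fin d → ℝ) → ℝ, Measurable f → wLpNorm p w f < ⊤ →
      (∫⁻ x, (maxFn f x) ^ p * ENNReal.ofReal (w x)) ^ (1/p)
        ≤ ENNReal.ofReal C * wLpNorm p w f) :
    apConst d p w ≤ ENNReal.ofReal (C ^ p) := by
  have hp0 : (0:ℝ) < p := by linarith
  have hp1 : (0:ℝ) < p - 1 := by linarith
  refine iSup_le ?_
  rintro ⟨Q, a, l, hl, rfl⟩
  set e : ℝ := -(1/(p-1)) with he
  set Q : Set (Fin d → ℝ) := {x | ∀ i, a i ≤ x i ∧ x i < a i + l} with hQdef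
  set σ : (Fin d → ℝ) → ℝ := fun x => w x ^ e with hσdef
  have hQpi : Q = Set.pi Set.univ (fun i => Set.Ico (a i) (a i + l)) := by
    ext x; simp [hQdef, Set.mem_pi, Set.mem_Ico]
  have hQmeas : MeasurableSet Q := by
    rw [hQpi]; exact MeasurableSet.univ_pi fun i => measurableSet_Ico
  have hV : volume Q = ENNReal.ofReal l ^ d := by
    rw [hQpi, volume_pi_pi]
    simp [Real.volume_Ico]
  have hV0 : volume Q ≠ 0 := by
    rw [hV]; exact pow_ne_zero _ (ENNReal.ofReal_pos.mpr hl).ne'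
  have hVtop : volume Q ≠ ⊤ := by
    rw [hV]; exact ENNReal.pow_ne_top ENNReal.ofReal_ne_top
  by_cases hInt : IntegrableOn σ Q volume
  case neg =>
    have h0 : avg Q σ = 0 := by
      rw [avg, integral_undef hInt, mul_zero]
    rw [h0, Real.zero_rpow (by linarith : p - 1 ≠ 0), mul_zero, ENNReal.ofReal_zero]
    exact zero_le
  -- main case
  have hσnonneg : ∀ᵐ x ∂(volume : Measure (Fin d → ℝ)), 0 < σ x :=
    hw.2.mono fun x hx => Real.rpow_pos_of_pos hx e
  have hwae : AEMeasurable w (volume : Measure (Fin d → ℝ)) :=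
    hw.1.aestronglyMeasurable.aemeasurable
  set w' := hwae.mk w with hw'def
  have hw'meas : Measurable w' := hwae.measurable_mk
  have hweq : w =ᵐ[(volume : Measure (Fin d → ℝ))] w' := hwae.ae_eq_mk
  have hae : ∀ᵐ x ∂(volume : Measure (Fin d → ℝ)), w x = w' x ∧ 0 < w x :=
    hweq.and hw.2
  set g : (Fin d → ℝ) → ℝ := Q.indicator (fun x => |w' x ^ e|) with hgdef
  have hgmeas : Measurable g :=
    ((hw'meas.pow_const e).abs).indicator hQmeas
  have hgnonneg : ∀ x, 0 ≤ g x := fun x =>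
    Set.indicator_nonneg (fun y _ => abs_nonneg _) x
  -- integral of |g| over Q equals integral of σ over Q
  have hIg : ∫ x in Q, |g x| = ∫ x in Q, σ x := by
    refine integral_congr_ae ?_
    filter_upwards [ae_restrict_of_ae hae, self_mem_ae_restrict hQmeas]
      with x hx hxQ
    rw [abs_of_nonneg (hgnonneg x), hgdef]
    simp only [Set.indicator_of_mem hxQ]
    rw [← hx.1, abs_of_pos (Real.rpow_pos_of_pos hx.2 e)]
  have hAavg : avg Q (fun y => |g y|) = avg Q σ := by
    rw [avg, avg, hIg]
  set S : ℝ≥0∞ := ∫⁻ x in Q, ENNReal.ofReal (σ x) with hSdef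
  have hσnonneg' : 0 ≤ᵐ[volume.restrict Q] σ :=
    ae_restrict_of_ae (hσnonneg.mono fun x hx => hx.le)
  have hS : S = ENNReal.ofReal (∫ x in Q, σ x) :=
    (ofReal_integral_eq_lintegral_ofReal hInt hσnonneg').symm
  have hStop : S ≠ ⊤ := by rw [hS]; exact ENNReal.ofReal_ne_top
  have hS0 : S ≠ 0 := by
    intro hS0
    have hm : AEMeasurable (fun x => ENNReal.ofReal (σ x)) (volume.restrict Q) :=
      ENNReal.measurable_ofReal.comp_aemeasurable hInt.aestronglyMeasurable.aemeasurable
    have hz := (lintegral_eq_zero_iff' hm).mp hS0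
    have hfalse : ∀ᵐ x ∂(volume.restrict Q), False := by
      filter_upwards [hz, ae_restrict_of_ae hσnonneg] with x h1 h2
      exact absurd h1 (ENNReal.ofReal_pos.mpr h2).ne'
    have : volume Q = 0 := by
      rw [ae_iff] at hfalse
      simpa [Measure.restrict_apply_univ] using hfalse
    exact hV0 this
  have hep : e * p + 1 = e := by
    rw [he]; field_simp; ring
  -- the integrand of wLpNorm of g
  have hlp : (∫⁻ x, ENNReal.ofReal |g x| ^ p * ENNReal.ofReal (w x)) = S := by
    have hcongr : (fun x => ENNReal.ofReal |g x| ^ p * ENNReal.ofReal (w x))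
        =ᵐ[(volume : Measure (Fin d → ℝ))] Q.indicator (fun x => ENNReal.ofReal (σ x)) := by
      filter_upwards [hae] with x hx
      by_cases hxQ : x ∈ Q
      · rw [Set.indicator_of_mem hxQ, hgdef, Set.indicator_of_mem hxQ, ← hx.1,
          abs_of_pos (abs_pos.mpr (Real.rpow_pos_of_pos hx.2 e).ne'),
          abs_of_pos (Real.rpow_pos_of_pos hx.2 e),
          ENNReal.ofReal_rpow_of_pos (Real.rpow_pos_of_pos hx.2 e),
          ← Real.rpow_mul hx.2.le]
        rw [← ENNReal.ofReal_mul (Real.rpow_nonneg hx.2.le _)]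
        rw [hσdef]
        congr 1
        rw [← Real.rpow_add_one hx.2.ne', hep]
      · simp [hgdef, Set.indicator_of_notMem hxQ,
          ENNReal.zero_rpow_of_pos hp0]
    rw [lintegral_congr_ae hcongr, lintegral_indicator hQmeas _]
  have hwlp : wLpNorm p w g = S ^ (1/p) := by rw [wLpNorm, hlp]
  have hfin : wLpNorm p w g < ⊤ := by
    rw [hwlp]
    exact ENNReal.rpow_lt_top_of_nonneg (by positivity) hStop
  have hb := hbound g hgmeas hfin
  rw [hwlp] at hb
  -- pointwise lower bound for the maximal function on Q
  have hmax : ∀ x ∈ Q, ENNReal.ofReal (avg Q σ) ≤ maxFn g x := by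
    intro x hx
    rw [maxFn]
    exact le_iSup_of_le ⟨Q, ⟨a, l, hl, hQdef⟩, hx⟩ (by rw [hAavg])
  set W : ℝ≥0∞ := ∫⁻ x in Q, ENNReal.ofReal (w x) with hWdef
  -- lower bound for the lintegral
  have hlow : (ENNReal.ofReal (avg Q σ)) ^ p * W
      ≤ ∫⁻ x, maxFn g x ^ p * ENNReal.ofReal (w x) := by
    calc (ENNReal.ofReal (avg Q σ)) ^ p * W
        = ∫⁻ x in Q, (ENNReal.ofReal (avg Q σ)) ^ p * ENNReal.ofReal (w x) :=
          (lintegral_const_mul' _ _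
            (ENNReal.rpow_ne_top_of_nonneg hp0.le ENNReal.ofReal_ne_top)).symm
      _ ≤ ∫⁻ x in Q, maxFn g x ^ p * ENNReal.ofReal (w x) := by
          refine lintegral_mono_ae ?_
          filter_upwards [self_mem_ae_restrict hQmeas] with x hx
          exact mul_le_mul_left (ENNReal.rpow_le_rpow (hmax x hx) hp0.le) _
      _ ≤ ∫⁻ x, maxFn g x ^ p * ENNReal.ofReal (w x) :=
          setLIntegral_le_lintegral _ _
  -- raise hbound to the power p
  have key : (ENNReal.ofReal (avg Q σ)) ^ p * W ≤ (ENNReal.ofReal C) ^ p * S := by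
    refine le_trans hlow ?_
    have h2 := ENNReal.rpow_le_rpow hb hp0.le
    rw [← ENNReal.rpow_mul, ENNReal.mul_rpow_of_nonneg _ _ hp0.le,
      ← ENNReal.rpow_mul, one_div, inv_mul_cancel₀ hp0.ne', ENNReal.rpow_one, ENNReal.rpow_one] at h2
    exact h2
  -- finiteness of W
  have hQK : Q ⊆ Set.pi Set.univ (fun i => Set.Icc (a i) (a i + l)) := by
    rw [hQpi]
    exact Set.pi_mono fun i _ => Set.Ico_subset_Icc_self
  have hIntw : IntegrableOn w Q volume :=
    (hw.1.integrableOn_isCompact (isCompact_univ_pi fun i => isCompact_Icc)).mono_set hQK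
  have hwnn : 0 ≤ᵐ[volume.restrict Q] w :=
    ae_restrict_of_ae (hw.2.mono fun x hx => hx.le)
  have hW : W = ENNReal.ofReal (∫ x in Q, w x) :=
    (ofReal_integral_eq_lintegral_ofReal hIntw hwnn).symm
  -- convert the averages to ENNReal expressions
  set V : ℝ≥0∞ := volume Q with hVdef
  have hVt : 0 < V.toReal := ENNReal.toReal_pos hV0 hVtop
  have hAvgσ : ENNReal.ofReal (avg Q σ) = V⁻¹ * S := by
    rw [avg, ENNReal.ofReal_mul (by positivity), hS,
      ENNReal.ofReal_inv_of_pos hVt, ENNReal.ofReal_toReal hVtop]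
  have hAvgw : ENNReal.ofReal (avg Q w) = V⁻¹ * W := by
    rw [avg, ENNReal.ofReal_mul (by positivity), hW,
      ENNReal.ofReal_inv_of_pos hVt, ENNReal.ofReal_toReal hVtop]
  -- nonnegativity of the averages
  have havgσ0 : 0 ≤ avg Q σ := by
    refine mul_nonneg (by positivity) (integral_nonneg_of_ae hσnonneg')
  have havgw0 : 0 ≤ avg Q w := by
    refine mul_nonneg (by positivity) (integral_nonneg_of_ae hwnn)
  -- final arithmetic
  have hbase0 : V⁻¹ * S ≠ 0 := by
    simp [ENNReal.inv_ne_zero, hVtop, hS0]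
  have hbaset : V⁻¹ * S ≠ ⊤ := by
    exact ENNReal.mul_ne_top (by simp [hV0]) hStop
  have hsplit : (V⁻¹ * S) ^ p = (V⁻¹ * S) ^ (p-1) * (V⁻¹ * S) := by
    nth_rewrite 1 [show p = (p - 1) + 1 by ring]
    rw [ENNReal.rpow_add _ _ hbase0 hbaset, ENNReal.rpow_one]
  have hfinal : ((V⁻¹ * W) * (V⁻¹ * S) ^ (p-1)) * S ≤ (ENNReal.ofReal C) ^ p * S := by
    calc ((V⁻¹ * W) * (V⁻¹ * S) ^ (p-1)) * S
        = ((V⁻¹ * S) ^ (p-1) * (V⁻¹ * S)) * W := by ring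
      _ = (V⁻¹ * S) ^ p * W := by rw [← hsplit]
      _ = (ENNReal.ofReal (avg Q σ)) ^ p * W := by rw [hAvgσ]
      _ ≤ (ENNReal.ofReal C) ^ p * S := key
  have hfinal2 : (V⁻¹ * W) * (V⁻¹ * S) ^ (p-1) ≤ (ENNReal.ofReal C) ^ p :=
    (ENNReal.mul_le_mul_iff_left hS0 hStop).mp hfinal
  calc ENNReal.ofReal (avg Q w * (avg Q σ) ^ (p-1))
      = ENNReal.ofReal (avg Q w) * ENNReal.ofReal ((avg Q σ) ^ (p-1)) :=
        ENNReal.ofReal_mul havgw0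
    _ = ENNReal.ofReal (avg Q w) * (ENNReal.ofReal (avg Q σ)) ^ (p-1) := by
        rw [ENNReal.ofReal_rpow_of_nonneg havgσ0 hp1.le]
    _ = (V⁻¹ * W) * (V⁻¹ * S) ^ (p-1) := by rw [hAvgw, hAvgσ]
    _ ≤ (ENNReal.ofReal C) ^ p := hfinal2
    _ = ENNReal.ofReal (C ^ p) := ENNReal.ofReal_rpow_of_pos hC

end
end

section
/- (Beznosova's Bellman function.) Let 𝔇 := {(u,v,l) ∈ ℝ³ : u > 0, v > 0, uv ≥ 1, 0 ≤ l ≤ 1} and define B(u,v,l) := u − 1/(v(1+l)). Then: (i) 0 ≤ B(u,v,l) ≤ u for all (u,v,l) ∈ 𝔇; (ii) (∂B/∂l)(u,v,l) ≥ 1/(4v) on 𝔇; (iii) the Hessian matrix d²B(u,v,l) is negative semidefinite at every point of 𝔇; and (iv) whenever x, x₊, x₋ ∈ 𝔇 satisfy x − (x₊ + x₋)/2 = (0,0,α) with α ≥ 0 and x = (u,v,l), one has B(x) − (B(x₊) + B(x₋))/2 ≥ α/(4v). -/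
noncomputable section

/-- Beznosova's Bellman function `B(u,v,l) = u - 1/(v(1+l))`. -/
def bellmanB (u v l : ℝ) : ℝ := u - 1 / (v * (1 + l))

/-- The domain `𝔇 = {(u,v,l) : u,v > 0, uv ≥ 1, 0 ≤ l ≤ 1}`. -/
def bellmanDomain : Set (ℝ × ℝ × ℝ) :=
  {x | 0 < x.1 ∧ 0 < x.2.1 ∧ 1 ≤ x.1 * x.2.1 ∧ 0 ≤ x.2.2 ∧ x.2.2 ≤ 1}

lemma hess_aux (u v l a b c : ℝ) (hv : 0 < v) (hl0 : 0 ≤ l) :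
    deriv (fun t => deriv
      (fun s => bellmanB (u + s * a) (v + s * b) (l + s * c)) t) 0 ≤ 0 := by
  set P : ℝ → ℝ := fun t => (v + t * b) * (1 + (l + t * c)) with hPdef
  have hP0 : 0 < P 0 := by simp [hPdef]; positivity
  have hPder : ∀ t : ℝ, HasDerivAt P (b * (1 + (l + t * c)) + (v + t * b) * c) t := by
    intro t
    have h1 : HasDerivAt (fun t : ℝ => v + t * b) b t := by
      simpa using ((hasDerivAt_id t).mul_const b).const_add v
    have h2 : HasDerivAt (fun t : ℝ => 1 + (l + t * c)) c t := by
      simpa using (((hasDerivAt_id t).mul_const c).const_add l).const_add 1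
    simpa [Pi.mul_def] using h1.mul h2
  have hS : IsOpen {t : ℝ | 0 < P t} := by
    have : Continuous P := by fun_prop
    exact isOpen_lt continuous_const this
  have hmem : {t : ℝ | 0 < P t} ∈ nhds (0 : ℝ) := hS.mem_nhds hP0
  have hF : ∀ t : ℝ, 0 < P t →
      HasDerivAt (fun s => bellmanB (u + s * a) (v + s * b) (l + s * c))
        (a - (0 * P t - 1 * (b * (1 + (l + t * c)) + (v + t * b) * c)) / P t ^ 2) t := by
    intro t ht
    have hlin : HasDerivAt (fun s : ℝ => u + s * a) a t := by
      simpa using ((hasDerivAt_id t).mul_const a).const_add u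
    have hdiv : HasDerivAt (fun s => 1 / P s)
        ((0 * P t - 1 * (b * (1 + (l + t * c)) + (v + t * b) * c)) / P t ^ 2) t :=
      (hasDerivAt_const t (1:ℝ)).div (hPder t) ht.ne'
    exact hlin.sub hdiv
  set g : ℝ → ℝ := fun t =>
      a + (b * (1 + (l + t * c)) + (v + t * b) * c) / ((v + t * b) * (1 + (l + t * c))) ^ 2
    with hgdef
  have heq : (fun t => deriv
      (fun s => bellmanB (u + s * a) (v + s * b) (l + s * c)) t) =ᶠ[nhds 0] g := by
    filter_upwards [hmem] with t ht
    rw [(hF t ht).deriv, hgdef]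
    simp only [hPdef]
    ring
  rw [heq.deriv_eq]
  have hN : HasDerivAt (fun t : ℝ => b * (1 + (l + t * c)) + (v + t * b) * c)
      (b * c + b * c) 0 := by
    have hN1 : HasDerivAt (fun t : ℝ => b * (1 + (l + t * c))) (b * c) 0 := by
      have h2 : HasDerivAt (fun t : ℝ => 1 + (l + t * c)) c 0 := by
        simpa using (((hasDerivAt_id (0:ℝ)).mul_const c).const_add l).const_add 1
      simpa using h2.const_mul b
    have hN2 : HasDerivAt (fun t : ℝ => (v + t * b) * c) (b * c) 0 := by
      have h1 : HasDerivAt (fun t : ℝ => v + t * b) b 0 := by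
        simpa using ((hasDerivAt_id (0:ℝ)).mul_const b).const_add v
      simpa using h1.mul_const c
    exact hN1.add hN2
  have hQ : HasDerivAt (fun t : ℝ => ((v + t * b) * (1 + (l + t * c))) ^ 2)
      (2 * P 0 ^ 1 * (b * (1 + (l + 0 * c)) + (v + 0 * b) * c)) 0 := by
    simpa [hPdef, Pi.pow_def] using (hPder 0).pow 2
  have hQ0 : (P 0) ^ 2 ≠ 0 := by positivity
  have hg : HasDerivAt g
      (((b * c + b * c) * P 0 ^ 2 -
        (b * (1 + (l + 0 * c)) + (v + 0 * b) * c) *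
          (2 * P 0 ^ 1 * (b * (1 + (l + 0 * c)) + (v + 0 * b) * c))) / (P 0 ^ 2) ^ 2) 0 := by
    have := (hN.div hQ (by simpa [hPdef] using hQ0)).const_add a
    simpa [hPdef, hgdef] using this
  rw [hg.deriv]
  have hP0' : P 0 = v * (1 + l) := by simp [hPdef]
  apply div_nonpos_of_nonpos_of_nonneg _ (by positivity)
  rw [hP0']
  have key : 0 ≤ (b * (1 + l)) ^ 2 + (b * (1 + l)) * (v * c) + (v * c) ^ 2 := by
    nlinarith [sq_nonneg (b * (1 + l) + v * c), sq_nonneg (b * (1 + l) - v * c)]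
  have hvl : 0 < v * (1 + l) := by positivity
  nlinarith [mul_nonneg hvl.le key, mul_pos hvl hvl]

/-- Midpoint convexity of `1/(xy)` on the positive quadrant. -/
lemma midpoint_conv (a b c d : ℝ) (ha : 0 < a) (hb : 0 < b) (hc : 0 < c) (hd : 0 < d) :
    1 / ((a + c) / 2 * ((b + d) / 2)) ≤ (1 / (a * b) + 1 / (c * d)) / 2 := by
  rw [div_le_div_iff₀ (by positivity) (by norm_num)]
  rw [div_add_div _ _ (by positivity) (by positivity), div_mul_eq_mul_div,
    le_div_iff₀ (by positivity)]
  nlinarith [sq_nonneg (a * b - c * d),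
    mul_nonneg (mul_nonneg hb.le hd.le) (sq_nonneg (a - c)),
    mul_nonneg (mul_nonneg ha.le hc.le) (sq_nonneg (b - d))]

/-- **Beznosova's Bellman function.** On `𝔇`:
(i) `0 ≤ B ≤ u`; (ii) `∂B/∂l ≥ 1/(4v)`; (iii) the Hessian of `B` is negative semidefinite,
expressed via second directional derivatives; (iv) the dyadic convexity property
`B(x) - (B(x₊)+B(x₋))/2 ≥ α/(4v)` whenever `x - (x₊+x₋)/2 = (0,0,α)` with `α ≥ 0`. -/
theorem beznosova_bellman_function :
    (∀ u v l : ℝ, (u, v, l) ∈ bellmanDomain →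
      0 ≤ bellmanB u v l ∧ bellmanB u v l ≤ u) ∧
    (∀ u v l : ℝ, (u, v, l) ∈ bellmanDomain →
      1 / (4 * v) ≤ deriv (fun t => bellmanB u v t) l) ∧
    (∀ x : ℝ × ℝ × ℝ, x ∈ bellmanDomain → ∀ h : ℝ × ℝ × ℝ,
      deriv (fun t => deriv
        (fun s => bellmanB (x.1 + s * h.1) (x.2.1 + s * h.2.1) (x.2.2 + s * h.2.2)) t) 0 ≤ 0) ∧
    (∀ u v l up vp lp um vm lm α : ℝ,
      (u, v, l) ∈ bellmanDomain → (up, vp, lp) ∈ bellmanDomain →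
      (um, vm, lm) ∈ bellmanDomain → 0 ≤ α →
      u - (up + um) / 2 = 0 → v - (vp + vm) / 2 = 0 → l - (lp + lm) / 2 = α →
      α / (4 * v) ≤ bellmanB u v l - (bellmanB up vp lp + bellmanB um vm lm) / 2) := by
  refine ⟨?_, ?_, ?_, ?_⟩
  · -- (i)
    rintro u v l ⟨hu, hv, huv, hl0, hl1⟩
    have h1l : (0:ℝ) < 1 + l := by linarith
    have hpos : 0 < v * (1 + l) := by positivity
    constructor
    · have h1 : 1 / (v * (1 + l)) ≤ 1 / v := by
        apply one_div_le_one_div_of_le hv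
        nlinarith
      have h2 : 1 / v ≤ u := by
        rw [div_le_iff₀ hv]; nlinarith
      simp only [bellmanB]; linarith
    · have : 0 < 1 / (v * (1 + l)) := by positivity
      simp only [bellmanB]; linarith
  · -- (ii)
    rintro u v l hx
    simp only [bellmanDomain, Set.mem_setOf_eq] at hx
    obtain ⟨hu, hv, huv, hl0, hl1⟩ := hx
    have h1l : (0:ℝ) < 1 + l := by linarith
    have hpos : (0:ℝ) < v * (1 + l) := by positivity
    have hP : HasDerivAt (fun t : ℝ => v * (1 + t)) v l := by
      simpa using ((hasDerivAt_id l).const_add 1).const_mul v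
    have hd : HasDerivAt (fun t => bellmanB u v t)
        (0 - (0 * (v * (1 + l)) - 1 * v) / (v * (1 + l)) ^ 2) l := by
      simp only [bellmanB]
      exact (hasDerivAt_const l u).sub ((hasDerivAt_const l (1:ℝ)).div hP hpos.ne')
    rw [hd.deriv]
    have hre : 0 - (0 * (v * (1 + l)) - 1 * v) / (v * (1 + l)) ^ 2
        = v / (v * (1 + l)) ^ 2 := by ring
    rw [hre, div_le_div_iff₀ (by positivity) (by positivity)]
    have h4 : (1 + l) ^ 2 ≤ 4 := by nlinarith
    nlinarith [mul_le_mul_of_nonneg_left h4 (mul_pos hv hv).le]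
  · -- (iii)
    rintro ⟨u, v, l⟩ ⟨hu, hv, huv, hl0, hl1⟩ ⟨a, b, c⟩
    exact hess_aux u v l a b c hv hl0
  · -- (iv)
    rintro u v l up vp lp um vm lm α hx hxp hxm hα h1 h2 h3
    simp only [bellmanDomain, Set.mem_setOf_eq] at hx hxp hxm
    obtain ⟨hu, hv, huv, hl0, hl1⟩ := hx
    obtain ⟨hup, hvp, huvp, hlp0, hlp1⟩ := hxp
    obtain ⟨hum, hvm, huvm, hlm0, hlm1⟩ := hxm
    have hsp : (0:ℝ) < 1 + lp := by linarith
    have hsm : (0:ℝ) < 1 + lm := by linarith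
    have hs : (0:ℝ) < 1 + l := by linarith
    have hsb : (0:ℝ) < 1 + l - α := by nlinarith
    -- midpoint convexity step
    have H1 : 1 / (v * (1 + l - α)) ≤ (1 / (vp * (1 + lp)) + 1 / (vm * (1 + lm))) / 2 := by
      have := midpoint_conv vp (1 + lp) vm (1 + lm) hvp hsp hvm hsm
      have hveq : (vp + vm) / 2 = v := by linarith
      have hseq : ((1 + lp) + (1 + lm)) / 2 = 1 + l - α := by linarith
      rwa [hveq, hseq] at this
    -- gain step
    have H2 : α / (4 * v) ≤ 1 / (v * (1 + l - α)) - 1 / (v * (1 + l)) := by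
      have heq : 1 / (v * (1 + l - α)) - 1 / (v * (1 + l))
          = α / (v * ((1 + l - α) * (1 + l))) := by
        field_simp
        ring
      rw [heq]
      apply div_le_div_of_nonneg_left hα (by positivity)
      have e1 : 1 + l - α ≤ 2 := by linarith
      have e2 : 1 + l ≤ 2 := by linarith
      have hprod : (1 + l - α) * (1 + l) ≤ 4 := by nlinarith
      nlinarith [mul_le_mul_of_nonneg_left hprod hv.le]
    simp only [bellmanB]
    linarith
end
end

section
/- (Verbitsky; Lerner–Nazarov.) Let Λ > 1 and let S be a family of standard dyadic cubes in ℝ^d. Then S is Λ-Carleson, i.e., ∑_{P∈S, P⊆Q} |P| ≤ Λ|Q| for every dyadic cube Q, if and only if S is (1/Λ)-sparse, i.e., there exist pairwise disjoint measurable sets E_Q ⊆ Q, one for each Q ∈ S, with |E_Q| ≥ (1/Λ)|Q|. -/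
open MeasureTheory ENNReal

noncomputable section

/-- The standard dyadic cube with parameter pair `q = (j, k)`. -/
def dCube (d : ℕ) (q : ℤ × (Fin d → ℤ)) : Set (Fin d → ℝ) := dyadicCube d q.1 q.2

set_option linter.unusedSectionVars false
set_option maxHeartbeats 1000000

namespace DyadicAux

lemma two_zpow_pos (j : ℤ) : (0:ℝ) < (2:ℝ)^j := zpow_pos (by norm_num) j

lemma mem_iff_floor {d : ℕ} {j : ℤ} {k : Fin d → ℤ} {x : Fin d → ℝ} :
    x ∈ dyadicCube d j k ↔ ∀ i, ⌊x i * (2:ℝ)^j⌋ = k i := by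
  unfold dyadicCube
  simp only [Set.mem_setOf_eq]
  refine forall_congr' fun i => ?_
  have h2 : (0:ℝ) < (2:ℝ)^j := two_zpow_pos j
  rw [zpow_neg,
      show (k i:ℝ) * ((2:ℝ)^j)⁻¹ = (k i:ℝ)/(2:ℝ)^j from (div_eq_mul_inv _ _).symm,
      show ((k i:ℝ)+1) * ((2:ℝ)^j)⁻¹ = ((k i:ℝ)+1)/(2:ℝ)^j from (div_eq_mul_inv _ _).symm,
      div_le_iff₀ h2, lt_div_iff₀ h2]
  constructor
  · rintro ⟨ha, hb⟩
    exact Int.floor_eq_iff.2 ⟨by exact_mod_cast ha, by exact_mod_cast hb⟩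
  · intro h
    exact ⟨by exact_mod_cast (Int.floor_eq_iff.1 h).1, by exact_mod_cast (Int.floor_eq_iff.1 h).2⟩

lemma mem_self_floor {d : ℕ} (g : ℤ) (x : Fin d → ℝ) :
    x ∈ dyadicCube d g (fun i => ⌊x i * (2:ℝ)^g⌋) := by
  rw [mem_iff_floor]; intro i; rfl

lemma subset_or_disjoint_of_le {d : ℕ} {j j' : ℤ} (h : j ≤ j') (k k' : Fin d → ℤ) :
    dyadicCube d j' k' ⊆ dyadicCube d j k ∨ Disjoint (dyadicCube d j' k') (dyadicCube d j k) := by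
  classical
  set e : ℕ := (j' - j).toNat with he
  have hje : j = j' - e := by
    rw [he, Int.toNat_of_nonneg (by omega)]; ring
  set m : Fin d → ℤ := fun i => (k' i) / (2^e : ℤ) with hm
  have key : ∀ x ∈ dyadicCube d j' k', ∀ i, ⌊x i * (2:ℝ)^j⌋ = m i := by
    intro x hx i
    have hfl := mem_iff_floor.1 hx i
    have h1 : ((k' i : ℝ)) ≤ x i * (2:ℝ)^j' := by exact_mod_cast (Int.floor_eq_iff.1 hfl).1
    have h2 : x i * (2:ℝ)^j' < (k' i : ℝ) + 1 := by exact_mod_cast (Int.floor_eq_iff.1 hfl).2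
    have hdm : (m i) * (2:ℤ)^e + (k' i) % (2^e : ℤ) = k' i := Int.ediv_mul_add_emod (k' i) (2^e)
    have hr0 : (0:ℤ) ≤ (k' i) % (2^e : ℤ) := Int.emod_nonneg _ (by positivity)
    have hr1 : (k' i) % (2^e : ℤ) < 2^e := Int.emod_lt_of_pos _ (by positivity)
    have hint1 : (m i) * 2^e ≤ k' i := by linarith
    have hint2 : k' i + 1 ≤ (m i + 1) * 2^e := by nlinarith
    have hreal1 : (m i : ℝ) * (2:ℝ)^(e:ℤ) ≤ (k' i : ℝ) := by
      rw [zpow_natCast]; exact_mod_cast hint1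
    have hreal2 : ((k' i : ℝ)) + 1 ≤ ((m i : ℝ) + 1) * (2:ℝ)^(e:ℤ) := by
      rw [zpow_natCast]; exact_mod_cast hint2
    have h2e : (0:ℝ) < (2:ℝ)^(e:ℤ) := two_zpow_pos _
    have hxj : x i * (2:ℝ)^j = (x i * (2:ℝ)^j') / (2:ℝ)^(e:ℤ) := by
      rw [hje, zpow_sub₀ (by norm_num : (2:ℝ) ≠ 0)]
      ring
    rw [Int.floor_eq_iff, hxj]
    constructor
    · rw [le_div_iff₀ h2e]
      exact le_trans hreal1 h1
    · rw [div_lt_iff₀ h2e]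
      calc x i * (2:ℝ)^j' < (k' i : ℝ) + 1 := h2
        _ ≤ ((m i : ℝ) + 1) * (2:ℝ)^(e:ℤ) := hreal2
  by_cases hkm : k = m
  · left
    intro x hx
    rw [mem_iff_floor]
    intro i
    rw [hkm]; exact key x hx i
  · right
    rw [Set.disjoint_left]
    intro x hx hx2
    apply hkm
    funext i
    have hk1 := key x hx i
    have hk2 := mem_iff_floor.1 hx2 i
    omega

lemma dCube_dichotomy {d : ℕ} (p q : ℤ × (Fin d → ℤ)) :
    dCube d p ⊆ dCube d q ∨ dCube d q ⊆ dCube d p ∨ Disjoint (dCube d p) (dCube d q) := by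
  rcases le_total q.1 p.1 with h | h
  · rcases subset_or_disjoint_of_le h q.2 p.2 with h1 | h1
    · exact Or.inl h1
    · exact Or.inr (Or.inr h1)
  · rcases subset_or_disjoint_of_le h p.2 q.2 with h1 | h1
    · exact Or.inr (Or.inl h1)
    · exact Or.inr (Or.inr h1.symm)

lemma dyadicCube_eq_pi {d : ℕ} (j : ℤ) (k : Fin d → ℤ) :
    dyadicCube d j k = Set.pi Set.univ (fun i => Set.Ico ((k i : ℝ) * (2:ℝ)^(-j)) (((k i:ℝ)+1) * (2:ℝ)^(-j))) := by
  ext x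
  simp [dyadicCube, Set.mem_pi, Set.mem_Ico]

lemma measurableSet_dyadicCube {d : ℕ} (j : ℤ) (k : Fin d → ℤ) :
    MeasurableSet (dyadicCube d j k) := by
  rw [dyadicCube_eq_pi]
  exact MeasurableSet.pi Set.countable_univ (fun i _ => measurableSet_Ico)

lemma volume_dyadicCube {d : ℕ} (j : ℤ) (k : Fin d → ℤ) :
    volume (dyadicCube d j k) = (ENNReal.ofReal ((2:ℝ)^(-j)))^d := by
  rw [dyadicCube_eq_pi, volume_pi_pi]
  have h : ∀ i : Fin d, volume (Set.Ico ((k i : ℝ) * (2:ℝ)^(-j)) (((k i:ℝ)+1) * (2:ℝ)^(-j)))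
      = ENNReal.ofReal ((2:ℝ)^(-j)) := by
    intro i
    rw [Real.volume_Ico]
    congr 1
    ring
  simp only [h, Finset.prod_const, Finset.card_univ, Fintype.card_fin]

lemma volume_dCube_pos {d : ℕ} (q : ℤ × (Fin d → ℤ)) : 0 < volume (dCube d q) := by
  rw [dCube, volume_dyadicCube]
  positivity

lemma volume_dCube_lt_top {d : ℕ} (q : ℤ × (Fin d → ℤ)) : volume (dCube d q) < ⊤ := by
  rw [dCube, volume_dyadicCube]
  exact ENNReal.pow_lt_top ENNReal.ofReal_lt_top

lemma exists_small_subset {d : ℕ} (hd : 1 ≤ d) (A : Set (Fin d → ℝ)) (hA : MeasurableSet A)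
    (hA0 : volume A ≠ 0) (ε : ℝ≥0∞) (hε : ε ≠ 0) :
    ∃ W, W ⊆ A ∧ MeasurableSet W ∧ 0 < volume W ∧ volume W ≤ ε := by
  obtain ⟨n, hn⟩ := ENNReal.exists_inv_nat_lt hε
  have hcube_small : ∀ k : Fin d → ℤ, volume (dyadicCube d (n:ℤ) k) ≤ ε := by
    intro k
    rw [volume_dyadicCube]
    have h1 : ENNReal.ofReal ((2:ℝ)^(-(n:ℤ))) = ((2:ℝ≥0∞)^(n:ℕ))⁻¹ := by
      rw [zpow_neg, zpow_natCast, ENNReal.ofReal_inv_of_pos (by positivity)]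
      congr 1
      rw [ENNReal.ofReal_pow (by norm_num)]
      norm_num
    rw [h1]
    have hle1 : ((2:ℝ≥0∞)^(n:ℕ))⁻¹ ≤ 1 := by
      rw [ENNReal.inv_le_one]
      exact one_le_pow_of_one_le' (by norm_num : (1:ℝ≥0∞) ≤ 2) n
    calc (((2:ℝ≥0∞)^(n:ℕ))⁻¹)^d ≤ (((2:ℝ≥0∞)^(n:ℕ))⁻¹)^1 :=
          pow_le_pow_of_le_one (zero_le) hle1 hd
      _ = ((2:ℝ≥0∞)^(n:ℕ))⁻¹ := pow_one _
      _ ≤ ((n:ℝ≥0∞))⁻¹ := by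
          apply ENNReal.inv_le_inv.2
          have h2 : ((2:ℝ≥0∞)^(n:ℕ)) = ((2^n : ℕ) : ℝ≥0∞) := by push_cast; ring
          rw [h2]
          exact Nat.cast_le.2 (Nat.lt_two_pow_self).le
      _ ≤ ε := hn.le
  have hcover : A ⊆ ⋃ k : Fin d → ℤ, (A ∩ dyadicCube d (n:ℤ) k) := by
    intro x hx
    exact Set.mem_iUnion.2 ⟨fun i => ⌊x i * (2:ℝ)^(n:ℤ)⌋, hx, mem_self_floor _ x⟩
  have hex : ∃ k : Fin d → ℤ, volume (A ∩ dyadicCube d (n:ℤ) k) ≠ 0 := by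
    by_contra h
    push_neg at h
    exact hA0 (measure_mono_null hcover (measure_iUnion_null h))
  obtain ⟨k, hk⟩ := hex
  exact ⟨A ∩ dyadicCube d (n:ℤ) k, Set.inter_subset_left,
    hA.inter (measurableSet_dyadicCube _ _), pos_iff_ne_zero.2 hk,
    le_trans (measure_mono Set.inter_subset_right) (hcube_small k)⟩

end DyadicAux

namespace SparseAbs

variable {X : Type*} [MeasurableSpace X] {ι : Type*} [Countable ι]

set_option linter.unusedSectionVars false

structure Hyps (μ : Measure X) (C : ι → Set X) (f : ι → ℕ) (η' Λ' : ℝ≥0∞) : Prop where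
  hf : Function.Injective f
  hmeas : ∀ i, MeasurableSet (C i)
  hfin : ∀ i, μ (C i) < ⊤
  hdich : ∀ p q, C p ⊆ C q ∨ C q ⊆ C p ∨ Disjoint (C p) (C q)
  hηt : η' ≠ ⊤
  hΛt : Λ' ≠ ⊤
  hηΛ : η' * Λ' ≤ 1
  hCar : ∀ q, (∑' p : {p : ι | C p ⊆ C q}, μ (C p.1)) ≤ Λ' * μ (C q)
  hsmall : ∀ A, MeasurableSet A → μ A ≠ 0 → ∀ ε : ℝ≥0∞, ε ≠ 0 →
    ∃ W, W ⊆ A ∧ MeasurableSet W ∧ 0 < μ W ∧ μ W ≤ ε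

variable {μ : Measure X} {C : ι → Set X} {f : ι → ℕ} {η' Λ' : ℝ≥0∞}

open scoped Classical in
/-- remaining demand at stage `n` inside the set `C q`. -/
def Rfun (μ : Measure X) (C : ι → Set X) (f : ι → ℕ) (η' : ℝ≥0∞) (n : ℕ) (q : ι) : ℝ≥0∞ :=
  η' * ∑' p : ι, (if n ≤ f p ∧ C p ⊆ C q then μ (C p) else 0)

lemma Rfun_mono {n m : ℕ} (h : n ≤ m) (q : ι) :
    Rfun μ C f η' m q ≤ Rfun μ C f η' n q := by
  classical
  unfold Rfun
  refine mul_le_mul' le_rfl (ENNReal.tsum_le_tsum fun p => ?_)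
  split_ifs with h1 h2
  · exact le_rfl
  · exact absurd ⟨le_trans h h1.1, h1.2⟩ h2
  · exact zero_le
  · exact zero_le

open scoped Classical in
lemma tsum_ite_le_car (H : Hyps μ C f η' Λ') (n : ℕ) (q : ι) :
    (∑' p : ι, (if n ≤ f p ∧ C p ⊆ C q then μ (C p) else 0)) ≤ Λ' * μ (C q) := by
  classical
  refine le_trans ?_ (H.hCar q)
  rw [tsum_subtype {p : ι | C p ⊆ C q} (fun p => μ (C p))]
  refine ENNReal.tsum_le_tsum fun p => ?_
  rw [Set.indicator_apply]
  split_ifs with h1 h2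
  all_goals first
  | exact le_rfl
  | exact zero_le
  | exact absurd h1.2 h2
  | exact absurd h2.2 h1

lemma Rfun_le (H : Hyps μ C f η' Λ') (n : ℕ) (q : ι) : Rfun μ C f η' n q ≤ μ (C q) := by
  calc Rfun μ C f η' n q ≤ η' * (Λ' * μ (C q)) :=
        mul_le_mul' le_rfl (tsum_ite_le_car H n q)
    _ = (η' * Λ') * μ (C q) := by ring
    _ ≤ 1 * μ (C q) := mul_le_mul' H.hηΛ le_rfl
    _ = μ (C q) := one_mul _

lemma Rfun_lt_top (H : Hyps μ C f η' Λ') (n : ℕ) (q : ι) : Rfun μ C f η' n q < ⊤ :=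
  lt_of_le_of_lt (Rfun_le H n q) (H.hfin q)

lemma Rfun_split (H : Hyps μ C f η' Λ') {i q : ι} {n : ℕ} (hfi : f i = n) (hsub : C i ⊆ C q) :
    Rfun μ C f η' n q = η' * μ (C i) + Rfun μ C f η' (n+1) q := by
  classical
  unfold Rfun
  rw [ENNReal.tsum_eq_add_tsum_ite i, if_pos ⟨by omega, hsub⟩, mul_add]
  congr 2
  refine tsum_congr fun p => ?_
  by_cases hp : p = i
  · subst hp
    rw [if_pos rfl, if_neg (fun hc => by omega)]
  · rw [if_neg hp]
    have hfp : f p ≠ n := fun hc => hp (H.hf (by rw [hc, hfi]))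
    by_cases h2 : n ≤ f p ∧ C p ⊆ C q
    · rw [if_pos h2, if_pos ⟨by omega, h2.2⟩]
    · rw [if_neg h2, if_neg (fun hc => h2 ⟨by omega, hc.2⟩)]

lemma Rfun_le_of_single (H : Hyps μ C f η' Λ') {i : ι} {n : ℕ} (hfi : f i = n) :
    η' * μ (C i) ≤ Rfun μ C f η' n i := by
  classical
  unfold Rfun
  refine mul_le_mul' le_rfl ?_
  have hiv : (if n ≤ f i ∧ C i ⊆ C i then μ (C i) else 0) = μ (C i) := by
    rw [if_pos ⟨by omega, le_rfl⟩]
  rw [← hiv]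
  exact ENNReal.le_tsum i

/-- admissible partial selections within `C i \ V`. -/
def Adm (μ : Measure X) (C : ι → Set X) (f : ι → ℕ) (η' : ℝ≥0∞) (i : ι) (V : Set X)
    (E : Set X) : Prop :=
  MeasurableSet E ∧ E ⊆ C i \ V ∧ μ E ≤ η' * μ (C i) ∧
    ∀ q, C q ⊆ C i → Rfun μ C f η' (f i + 1) q ≤ μ ((C q \ V) \ E)

lemma adm_empty (H : Hyps μ C f η' Λ') {i : ι} {V : Set X}
    (hinv : ∀ q, Rfun μ C f η' (f i) q ≤ μ (C q \ V)) : Adm μ C f η' i V ∅ := by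
  refine ⟨MeasurableSet.empty, Set.empty_subset _, by simp, fun q _ => ?_⟩
  rw [Set.diff_empty]
  exact le_trans (Rfun_mono (Nat.le_succ _) q) (hinv q)

open scoped Classical in
lemma tsum_ite_le_car' (H : Hyps μ C f η' Λ') (q : ι) :
    (∑' p : ι, (if C p ⊆ C q then μ (C p) else 0)) ≤ Λ' * μ (C q) := by
  refine le_trans ?_ (H.hCar q)
  rw [tsum_subtype {p : ι | C p ⊆ C q} (fun p => μ (C p))]
  refine ENNReal.tsum_le_tsum fun p => ?_
  rw [Set.indicator_apply]
  split_ifs with h1 h2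
  all_goals first
  | exact le_rfl
  | exact zero_le
  | exact absurd h1 h2
  | exact absurd h2 h1

lemma finite_between (H : Hyps μ C f η' Λ') (q i : ι) (hq0 : μ (C q) ≠ 0) :
    {p : ι | C q ⊆ C p ∧ C p ⊆ C i}.Finite := by
  classical
  by_contra hinf
  have hcar := tsum_ite_le_car' H i
  have hΛtop : Λ' * μ (C i) ≠ ⊤ := ENNReal.mul_ne_top H.hΛt (H.hfin i).ne
  obtain ⟨N, hN⟩ := ENNReal.exists_nat_gt ((ENNReal.div_lt_top hΛtop hq0).ne)
  have hmul : Λ' * μ (C i) < N * μ (C q) := by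
    rwa [ENNReal.div_lt_iff (Or.inl hq0) (Or.inl (H.hfin q).ne)] at hN
  obtain ⟨t, hts, hcard⟩ := (show Set.Infinite _ from hinf).exists_subset_card_eq N
  have hsum : (N : ℝ≥0∞) * μ (C q) ≤ ∑ p ∈ t, (if C p ⊆ C i then μ (C p) else 0) := by
    calc (N:ℝ≥0∞) * μ (C q) = ∑ _p ∈ t, μ (C q) := by
          rw [Finset.sum_const, hcard, nsmul_eq_mul]
      _ ≤ ∑ p ∈ t, (if C p ⊆ C i then μ (C p) else 0) := by
          refine Finset.sum_le_sum fun p hp => ?_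
          have hpm := hts (Finset.mem_coe.2 hp)
          rw [if_pos hpm.2]
          exact measure_mono hpm.1
  have hle2 := le_trans hsum (le_trans (ENNReal.sum_le_tsum t) hcar)
  exact absurd hmul hle2.not_gt

lemma null_infinite_chains (H : Hyps μ C f η' Λ') (i : ι) :
    μ {x : X | ¬ ({pp : {p : ι | C p ⊆ C i} | x ∈ C pp.1}).Finite} = 0 := by
  classical
  set φ : X → ℝ≥0∞ :=
    fun x => ∑' pp : {p : ι | C p ⊆ C i}, Set.indicator (C pp.1) (fun _ => (1:ℝ≥0∞)) x with hφ
  have hφmeas : Measurable φ :=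
    Measurable.ennreal_tsum fun pp => measurable_const.indicator (H.hmeas pp.1)
  have hφint : ∫⁻ x, φ x ∂μ ≠ ⊤ := by
    have h1 : ∫⁻ x, φ x ∂μ = ∑' pp : {p : ι | C p ⊆ C i}, μ (C pp.1) := by
      simp only [hφ]
      rw [lintegral_tsum (f := fun (pp : {p : ι | C p ⊆ C i}) =>
        (C pp.1).indicator (fun _ => (1:ℝ≥0∞)))
        (fun pp => (measurable_const.indicator (H.hmeas pp.1)).aemeasurable)]
      refine tsum_congr fun pp => ?_
      exact lintegral_indicator_one (H.hmeas pp.1)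
    rw [h1]
    exact (lt_of_le_of_lt (H.hCar i) (ENNReal.mul_lt_top (lt_top_iff_ne_top.2 H.hΛt)
      (H.hfin i))).ne
  have hae := ae_lt_top hφmeas hφint
  refine measure_mono_null ?_ (ae_iff.1 hae)
  intro x hx
  simp only [Set.mem_setOf_eq] at hx ⊢
  have hxN : ∀ N : ℕ, (N:ℝ≥0∞) ≤ φ x := by
    intro N
    obtain ⟨t, hts, hcard⟩ := (show Set.Infinite _ from hx).exists_subset_card_eq N
    calc (N:ℝ≥0∞) = ∑ _pp ∈ t, (1:ℝ≥0∞) := by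
          rw [Finset.sum_const, hcard, nsmul_eq_mul, mul_one]
      _ = ∑ pp ∈ t, Set.indicator (C pp.1) (fun _ => (1:ℝ≥0∞)) x := by
          refine Finset.sum_congr rfl fun pp hpp => ?_
          have hmem : x ∈ C pp.1 := hts (Finset.mem_coe.2 hpp)
          exact (Set.indicator_of_mem hmem (fun _ => (1:ℝ≥0∞))).symm
      _ ≤ φ x := ENNReal.sum_le_tsum t
  have hxtop : φ x = ⊤ := by
    by_contra hne
    obtain ⟨N, hN⟩ := ENNReal.exists_nat_gt hne
    exact absurd (hxN N) hN.not_ge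
  rw [hxtop]
  exact lt_irrefl ⊤

lemma adm_gain (H : Hyps μ C f η' Λ') {i : ι} {V : Set X} (hV : MeasurableSet V)
    (hinv : ∀ q, Rfun μ C f η' (f i) q ≤ μ (C q \ V)) {E : Set X}
    (hE : Adm μ C f η' i V E) (hlt : μ E < η' * μ (C i)) :
    ∃ E', Adm μ C f η' i V E' ∧ E ⊆ E' ∧ μ E < μ E' := by
  classical
  have htarget_ne_top : η' * μ (C i) ≠ ⊤ := ENNReal.mul_ne_top H.hηt (H.hfin i).ne
  have hμE_ne_top : μ E ≠ ⊤ := (hlt.trans (lt_top_iff_ne_top.2 htarget_ne_top)).ne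
  set Tight : ι → Prop := fun q => C q ⊆ C i ∧ μ (C q) ≠ 0 ∧
    μ ((C q \ V) \ E) ≤ Rfun μ C f η' (f i + 1) q with hTight
  set TS : Set (Set X) := {A | ∃ q, Tight q ∧ C q = A} with hTS
  set MaxT : Set (Set X) := {A | A ∈ TS ∧ ∀ B ∈ TS, A ⊆ B → A = B} with hMaxT
  -- every tight set is inside a maximal tight set
  have hcover : ∀ q, Tight q → ∃ A, A ∈ MaxT ∧ C q ⊆ A := by
    intro q hq
    have hfin1 : {B | B ∈ TS ∧ C q ⊆ B}.Finite := by
      have himg : {B | B ∈ TS ∧ C q ⊆ B} ⊆ (fun p => C p) '' {p : ι | C q ⊆ C p ∧ C p ⊆ C i} := by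
        rintro B ⟨⟨p, hp, rfl⟩, hqB⟩
        exact ⟨p, ⟨hqB, hp.1⟩, rfl⟩
      exact ((finite_between H q i hq.2.1).image _).subset himg
    have hne : C q ∈ {B | B ∈ TS ∧ C q ⊆ B} := ⟨⟨q, hq, rfl⟩, subset_rfl⟩
    obtain ⟨A, hAs, hAmax⟩ := Set.Finite.exists_maximalFor id _ hfin1 ⟨C q, hne⟩
    refine ⟨A, ⟨hAs.1, fun B hB hAB => ?_⟩, hAs.2⟩
    exact Set.Subset.antisymm hAB (hAmax (j := B) ⟨hB, hAs.2.trans hAB⟩ hAB)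
  have hMdisj : ∀ A, A ∈ MaxT → ∀ B, B ∈ MaxT → A ≠ B → Disjoint A B := by
    intro A hA B hB hne
    obtain ⟨p, hp, hpA⟩ := hA.1
    obtain ⟨r, hr, hrB⟩ := hB.1
    subst hpA
    subst hrB
    rcases H.hdich p r with h | h | h
    · exact absurd (hA.2 (C r) ⟨r, hr, rfl⟩ h) hne
    · exact absurd (hB.2 (C p) ⟨p, hp, rfl⟩ h).symm hne
    · exact h
  have hMcount : MaxT.Countable :=
    Set.Countable.mono (fun A hA => by
      obtain ⟨q, _, hq⟩ := hA.1
      exact ⟨q, hq⟩) (Set.countable_range C)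
  haveI := hMcount.to_subtype
  have hrep0 : ∀ A : MaxT, ∃ q, Tight q ∧ C q = A.1 := fun A => A.2.1
  choose rep hrep1 hrep2 using hrep0
  -- sum of demands of maximal tight sets
  have hsum : (∑' A : ↥MaxT, Rfun μ C f η' (f i + 1) (rep A)) ≤ Rfun μ C f η' (f i + 1) i := by
    unfold Rfun
    rw [ENNReal.tsum_mul_left]
    refine mul_le_mul' le_rfl ?_
    rw [ENNReal.tsum_comm]
    refine ENNReal.tsum_le_tsum fun p => ?_
    by_cases h0 : μ (C p) = 0
    · have hz : ∀ A : ↥MaxT,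
          (if (f i + 1) ≤ f p ∧ C p ⊆ C (rep A) then μ (C p) else 0) = 0 := by
        intro A
        split_ifs
        · exact h0
        · rfl
      rw [tsum_congr hz, tsum_zero]
      exact zero_le
    · by_cases hexA : ∃ A : ↥MaxT, C p ⊆ A.1
      · obtain ⟨A₀, hA₀⟩ := hexA
        have hz : ∀ B : ↥MaxT, B ≠ A₀ →
            (if (f i + 1) ≤ f p ∧ C p ⊆ C (rep B) then μ (C p) else 0) = 0 := by
          intro B hBne
          rw [if_neg]
          rintro ⟨-, hpB⟩
          rw [hrep2 B] at hpB
          have hdisj := hMdisj A₀.1 A₀.2 B.1 B.2 (fun hc => hBne (Subtype.ext hc.symm))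
          have hsub0 : C p ⊆ A₀.1 ∩ B.1 := Set.subset_inter hA₀ hpB
          have h00 : μ (C p) = 0 := by
            have hmm : μ (C p) ≤ μ (A₀.1 ∩ B.1) := measure_mono hsub0
            rwa [Set.disjoint_iff_inter_eq_empty.1 hdisj, measure_empty,
              nonpos_iff_eq_zero] at hmm
          exact h0 h00
        rw [tsum_eq_single A₀ hz]
        have hCi : C p ⊆ C i := by
          obtain ⟨r, hr, hCr⟩ := A₀.2.1
          rw [← hCr] at hA₀
          exact hA₀.trans hr.1
        split_ifs with h1 h2
        all_goals first
        | exact le_rfl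
        | exact zero_le
        | exact absurd ⟨h1.1, hCi⟩ h2
      · push_neg at hexA
        have hz : ∀ A : ↥MaxT,
            (if (f i + 1) ≤ f p ∧ C p ⊆ C (rep A) then μ (C p) else 0) = 0 := by
          intro A
          rw [if_neg]
          rintro ⟨-, hpA⟩
          rw [hrep2 A] at hpA
          exact hexA A hpA
        rw [tsum_congr hz, tsum_zero]
        exact zero_le
  -- null sets
  set NN := {x : X | ¬ ({pp : {p : ι | C p ⊆ C i} | x ∈ C pp.1}).Finite} with hNNdef
  set ZZ := ⋃ pp : {p : ι | C p ⊆ C i ∧ μ (C p) = 0}, C pp.1 with hZZdef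
  set Bad := ⋃ A : ↥MaxT, A.1 with hBaddef
  have hNN : μ NN = 0 := null_infinite_chains H i
  have hZZ : μ ZZ = 0 := measure_iUnion_null fun pp => pp.2.2
  set lowA : ℕ → Set X := fun k =>
    ⋃ pp : {q : ι | C q ⊆ C i ∧
      μ ((C q \ V) \ E) < Rfun μ C f η' (f i + 1) q + ((k:ℝ≥0∞)+1)⁻¹}, C pp.1 with hlowA
  set Aset : ℕ → Set X := fun k => ((C i \ V) \ E) \ lowA k with hAset
  have hAmeas : ∀ k, MeasurableSet (Aset k) := by
    intro k
    exact (((H.hmeas i).diff hV).diff hE.1).diff (MeasurableSet.iUnion fun pp => H.hmeas pp.1)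
  have hincl : ((C i \ V) \ E) \ (NN ∪ ZZ ∪ Bad) ⊆ ⋃ k : ℕ, Aset k := by
    rintro x ⟨hxFE, hxbad⟩
    have hxNN : x ∉ NN := fun h => hxbad (Or.inl (Or.inl h))
    have hxZZ : x ∉ ZZ := fun h => hxbad (Or.inl (Or.inr h))
    have hxBad : x ∉ Bad := fun h => hxbad (Or.inr h)
    have hfinT : ({pp : {p : ι | C p ⊆ C i} | x ∈ C pp.1}).Finite := not_not.1 hxNN
    have hPx : {p : ι | x ∈ C p ∧ C p ⊆ C i}.Finite := by
      have himg : {p : ι | x ∈ C p ∧ C p ⊆ C i} ⊆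
          Subtype.val '' {pp : {p : ι | C p ⊆ C i} | x ∈ C pp.1} := by
        rintro p ⟨hxp, hpi⟩
        exact ⟨⟨p, hpi⟩, hxp, rfl⟩
      exact (hfinT.image _).subset himg
    have hgap : ∀ q, ∃ m : ℕ, (x ∈ C q ∧ C q ⊆ C i) →
        Rfun μ C f η' (f i + 1) q + ((m:ℝ≥0∞)+1)⁻¹ ≤ μ ((C q \ V) \ E) := by
      intro q
      by_cases hq : x ∈ C q ∧ C q ⊆ C i
      swap
      · exact ⟨0, fun h => absurd h hq⟩
      have hq0 : μ (C q) ≠ 0 := by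
        intro h0
        exact hxZZ (Set.mem_iUnion.2 ⟨⟨q, hq.2, h0⟩, hq.1⟩)
      have hnt : ¬ μ ((C q \ V) \ E) ≤ Rfun μ C f η' (f i + 1) q := by
        intro hle
        obtain ⟨A, hAM, hqA⟩ := hcover q ⟨hq.2, hq0, hle⟩
        exact hxBad (Set.mem_iUnion.2 ⟨⟨A, hAM⟩, hqA hq.1⟩)
      have hltq := not_le.1 hnt
      obtain ⟨m, hm⟩ := ENNReal.exists_inv_nat_lt (tsub_pos_of_lt hltq).ne'
      refine ⟨m, fun _ => ?_⟩
      have h1 : ((m:ℝ≥0∞)+1)⁻¹ ≤ (m:ℝ≥0∞)⁻¹ := ENNReal.inv_le_inv.2 le_self_add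
      calc Rfun μ C f η' (f i + 1) q + ((m:ℝ≥0∞)+1)⁻¹
          ≤ Rfun μ C f η' (f i + 1) q +
            (μ ((C q \ V) \ E) - Rfun μ C f η' (f i + 1) q) :=
            add_le_add_right (le_trans h1 hm.le) _
        _ = μ ((C q \ V) \ E) := add_tsub_cancel_of_le hltq.le
    choose kf hkf using hgap
    obtain ⟨K, hK⟩ := (hPx.image kf).bddAbove
    refine Set.mem_iUnion.2 ⟨K, hxFE, ?_⟩
    intro hxlow
    obtain ⟨pp, hxpp⟩ := Set.mem_iUnion.1 hxlow
    have hqPx : pp.1 ∈ {p : ι | x ∈ C p ∧ C p ⊆ C i} := ⟨hxpp, pp.2.1⟩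
    have hkq : kf pp.1 ≤ K := hK (Set.mem_image_of_mem kf hqPx)
    have hge := hkf pp.1 ⟨hxpp, pp.2.1⟩
    have hmono2 : ((K:ℝ≥0∞)+1)⁻¹ ≤ ((kf pp.1:ℝ≥0∞)+1)⁻¹ :=
      ENNReal.inv_le_inv.2 (add_le_add_left (Nat.cast_le.2 hkq) 1)
    exact absurd pp.2.2 (not_lt.2 (le_trans (add_le_add_right hmono2 _) hge))
  -- positivity of some Aset
  have hApos : ∃ k : ℕ, μ (Aset k) ≠ 0 := by
    by_contra hall
    push_neg at hall
    have hAun : μ (⋃ k : ℕ, Aset k) = 0 := measure_iUnion_null hall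
    have hcov2 : (C i \ V) \ E ⊆ ((⋃ k : ℕ, Aset k) ∪ (NN ∪ ZZ)) ∪
        (⋃ A : ↥MaxT, A.1 ∩ ((C i \ V) \ E)) := by
      intro x hx
      by_cases hb : x ∈ NN ∪ ZZ ∪ Bad
      · rcases hb with hb | hb
        · exact Or.inl (Or.inr hb)
        · obtain ⟨A, hA⟩ := Set.mem_iUnion.1 hb
          exact Or.inr (Set.mem_iUnion.2 ⟨A, hA, hx⟩)
      · exact Or.inl (Or.inl (hincl ⟨hx, hb⟩))
    have h00 : μ ((⋃ k : ℕ, Aset k) ∪ (NN ∪ ZZ)) = 0 :=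
      measure_union_null hAun (measure_union_null hNN hZZ)
    have hb1 : μ ((C i \ V) \ E) ≤ ∑' A : ↥MaxT, μ (A.1 ∩ ((C i \ V) \ E)) := by
      calc μ ((C i \ V) \ E)
          ≤ μ (((⋃ k : ℕ, Aset k) ∪ (NN ∪ ZZ))) + μ (⋃ A : ↥MaxT, A.1 ∩ ((C i \ V) \ E)) :=
            le_trans (measure_mono hcov2) (measure_union_le _ _)
        _ = μ (⋃ A : ↥MaxT, A.1 ∩ ((C i \ V) \ E)) := by rw [h00, zero_add]
        _ ≤ ∑' A : ↥MaxT, μ (A.1 ∩ ((C i \ V) \ E)) := measure_iUnion_le _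
    have heach : ∀ A : ↥MaxT, μ (A.1 ∩ ((C i \ V) \ E)) ≤ Rfun μ C f η' (f i + 1) (rep A) := by
      intro A
      have hrA := hrep1 A
      have hCA := hrep2 A
      have hseteq : A.1 ∩ ((C i \ V) \ E) = (C (rep A) \ V) \ E := by
        rw [← hCA]
        ext x
        constructor
        · rintro ⟨hxA, ⟨_, hxv⟩, hxe⟩
          exact ⟨⟨hxA, hxv⟩, hxe⟩
        · rintro ⟨⟨hxq, hxv⟩, hxe⟩
          exact ⟨hxq, ⟨hrA.1 hxq, hxv⟩, hxe⟩
      rw [hseteq]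
      exact hrA.2.2
    have hchain2 : μ ((C i \ V) \ E) ≤ Rfun μ C f η' (f i + 1) i :=
      le_trans hb1 (le_trans (ENNReal.tsum_le_tsum heach) hsum)
    have hsplit := Rfun_split H (rfl : f i = f i) (subset_rfl : C i ⊆ C i)
    have hFE : μ (C i \ V) ≤ μ ((C i \ V) \ E) + μ E := by
      refine le_trans (measure_mono ?_) (measure_union_le _ _)
      intro x hx
      by_cases hxe : x ∈ E
      · exact Or.inr hxe
      · exact Or.inl ⟨hx, hxe⟩
    have hcontr : η' * μ (C i) + Rfun μ C f η' (f i + 1) i ≤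
        Rfun μ C f η' (f i + 1) i + μ E := by
      calc η' * μ (C i) + Rfun μ C f η' (f i + 1) i = Rfun μ C f η' (f i) i := hsplit.symm
        _ ≤ μ (C i \ V) := hinv i
        _ ≤ μ ((C i \ V) \ E) + μ E := hFE
        _ ≤ Rfun μ C f η' (f i + 1) i + μ E := add_le_add_left hchain2 _
    rw [add_comm (η' * μ (C i))] at hcontr
    have hfinal3 := ENNReal.le_of_add_le_add_left (Rfun_lt_top H (f i + 1) i).ne hcontr
    exact absurd hfinal3 hlt.not_ge
  obtain ⟨k, hk⟩ := hApos
  set δ : ℝ≥0∞ := ((k:ℝ≥0∞)+1)⁻¹ with hδdef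
  have hδ0 : δ ≠ 0 := ENNReal.inv_ne_zero.2 (by
    exact ENNReal.add_ne_top.2 ⟨ENNReal.natCast_ne_top k, ENNReal.one_ne_top⟩)
  have hδtop : δ ≠ ⊤ := ENNReal.inv_ne_top.2 (by simp)
  set Dleft : ℝ≥0∞ := η' * μ (C i) - μ E with hDleft
  have hD0 : Dleft ≠ 0 := (tsub_pos_of_lt hlt).ne'
  have hε0 : min δ Dleft ≠ 0 := by
    rcases min_cases δ Dleft with ⟨h1, _⟩ | ⟨h1, _⟩
    · rw [h1]; exact hδ0
    · rw [h1]; exact hD0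
  obtain ⟨W, hWA, hWmeas, hW0, hWle⟩ := H.hsmall (Aset k) (hAmeas k) hk (min δ Dleft) hε0
  have hWFE : W ⊆ (C i \ V) \ E := hWA.trans Set.diff_subset
  have hWdisjE : Disjoint W E := Set.disjoint_left.2 fun x hxW => (hWFE hxW).2
  have hμEW : μ (E ∪ W) = μ E + μ W := measure_union hWdisjE.symm hWmeas
  refine ⟨E ∪ W, ⟨hE.1.union hWmeas,
      Set.union_subset hE.2.1 (hWFE.trans Set.diff_subset), ?_, ?_⟩,
      Set.subset_union_left, ?_⟩
  · rw [hμEW]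
    calc μ E + μ W ≤ μ E + Dleft := add_le_add_right (hWle.trans (min_le_right _ _)) _
      _ = η' * μ (C i) := add_tsub_cancel_of_le hlt.le
  · intro q hq
    rcases Set.eq_empty_or_nonempty (W ∩ C q) with hWq | ⟨x₀, hx₀W, hx₀q⟩
    · have hseteq : (C q \ V) \ (E ∪ W) = (C q \ V) \ E := by
        ext x
        simp only [Set.mem_diff, Set.mem_union]
        constructor
        · rintro ⟨h1, h2⟩
          exact ⟨h1, fun hc => h2 (Or.inl hc)⟩
        · rintro ⟨h1, h2⟩
          refine ⟨h1, fun hc => ?_⟩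
          rcases hc with hc | hc
          · exact h2 hc
          · exact (Set.eq_empty_iff_forall_notMem.1 hWq x) ⟨hc, h1.1⟩
      rw [hseteq]
      exact hE.2.2.2 q hq
    · have hx₀A : x₀ ∈ Aset k := hWA hx₀W
      have hnl : ¬ (μ ((C q \ V) \ E) < Rfun μ C f η' (f i + 1) q + δ) := by
        intro hlow
        exact hx₀A.2 (Set.mem_iUnion.2 ⟨⟨q, hq, hlow⟩, hx₀q⟩)
      have hg : Rfun μ C f η' (f i + 1) q + δ ≤ μ ((C q \ V) \ E) := not_lt.1 hnl
      have hsub2 : (C q \ V) \ E ⊆ ((C q \ V) \ (E ∪ W)) ∪ W := by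
        intro x hx
        by_cases hxw : x ∈ W
        · exact Or.inr hxw
        · exact Or.inl ⟨hx.1, fun hc => hc.elim hx.2 hxw⟩
      have hmb : μ ((C q \ V) \ E) ≤ μ ((C q \ V) \ (E ∪ W)) + μ W :=
        le_trans (measure_mono hsub2) (measure_union_le _ _)
      have hfinal2 : Rfun μ C f η' (f i + 1) q + δ ≤ μ ((C q \ V) \ (E ∪ W)) + δ :=
        le_trans hg (le_trans hmb (add_le_add_right (hWle.trans (min_le_left _ _)) _))
      exact ENNReal.le_of_add_le_add_right hδtop hfinal2
  · rw [hμEW]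
    exact ENNReal.lt_add_right hμE_ne_top hW0.ne' 

/-- The inner extension step: given the invariant, we can select a set of measure exactly
`η' * μ (C i)` inside `C i \ V` preserving the invariant for subsets. -/
lemma step_exists (H : Hyps μ C f η' Λ') (i : ι) (V : Set X) :
    ∃ E : Set X, MeasurableSet E ∧ E ⊆ C i \ V ∧
      ((MeasurableSet V ∧ ∀ q, Rfun μ C f η' (f i) q ≤ μ (C q \ V)) →
        (μ E = η' * μ (C i) ∧
          ∀ q, C q ⊆ C i → Rfun μ C f η' (f i + 1) q ≤ μ ((C q \ V) \ E))) := by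
  classical
  by_cases hcase : MeasurableSet V ∧ ∀ q, Rfun μ C f η' (f i) q ≤ μ (C q \ V)
  swap
  · exact ⟨∅, MeasurableSet.empty, Set.empty_subset _, fun h => absurd h hcase⟩
  obtain ⟨hV, hinv⟩ := hcase
  set target := η' * μ (C i) with htarget
  have htarget_ne_top : target ≠ ⊤ := ENNReal.mul_ne_top H.hηt (H.hfin i).ne
  -- the supremum functional
  set τ : Set X → ℝ≥0∞ :=
    fun E => ⨆ E' : {E' : Set X // Adm μ C f η' i V E' ∧ E ⊆ E'}, μ E'.1 with hτ
  have hτ_le_target : ∀ E, τ E ≤ target := fun E => iSup_le fun E' => E'.2.1.2.2.1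
  have hτ_ge : ∀ (E E' : Set X), Adm μ C f η' i V E' → E ⊆ E' → μ E' ≤ τ E := by
    intro E E' h1 h2
    exact le_iSup (fun E'' : {E'' : Set X // Adm μ C f η' i V E'' ∧ E ⊆ E''} => μ E''.1)
      ⟨E', h1, h2⟩
  have hstep : ∀ E : {E : Set X // Adm μ C f η' i V E},
      ∃ E' : {E' : Set X // Adm μ C f η' i V E'},
        E.1 ⊆ E'.1 ∧ μ E.1 + τ E.1 ≤ 2 * μ E'.1 := by
    intro E
    by_contra hno
    push_neg at hno
    have h2τ : 2 * τ E.1 ≤ μ E.1 + τ E.1 := by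
      rw [ENNReal.mul_iSup]
      refine iSup_le fun E' => ?_
      exact (hno ⟨E'.1, E'.2.1⟩ E'.2.2).le
    have hττ : τ E.1 ≤ μ E.1 := by
      rw [two_mul] at h2τ
      exact ENNReal.le_of_add_le_add_right
        (lt_of_le_of_lt (hτ_le_target E.1) (lt_top_iff_ne_top.2 htarget_ne_top)).ne h2τ
    refine absurd ?_ (hno E subset_rfl).not_ge
    calc μ E.1 + τ E.1 ≤ μ E.1 + μ E.1 := add_le_add_right hττ _
      _ = 2 * μ E.1 := (two_mul _).symm
  choose g hg1 hg2 using hstep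
  set Ek : ℕ → {E : Set X // Adm μ C f η' i V E} :=
    fun k => g^[k] ⟨∅, adm_empty H hinv⟩ with hEk
  have hEk_succ : ∀ k, Ek (k+1) = g (Ek k) := fun k => Function.iterate_succ_apply' g k _
  have hEk_mono : Monotone fun k => (Ek k).1 := by
    apply monotone_nat_of_le_succ
    intro k
    rw [hEk_succ k]
    exact hg1 (Ek k)
  set Eω : Set X := ⋃ k, (Ek k).1 with hEω
  have hEωmeas : MeasurableSet Eω := MeasurableSet.iUnion fun k => (Ek k).2.1
  have hEωsub : Eω ⊆ C i \ V := Set.iUnion_subset fun k => (Ek k).2.2.1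
  have hμEω : μ Eω = ⨆ k, μ (Ek k).1 := (hEk_mono.directed_le).measure_iUnion
  have hEωle : μ Eω ≤ target := by
    rw [hμEω]; exact iSup_le fun k => (Ek k).2.2.2.1
  have hEωcons : ∀ q, C q ⊆ C i →
      Rfun μ C f η' (f i + 1) q ≤ μ ((C q \ V) \ Eω) := by
    intro q hq
    have hint : (C q \ V) \ Eω = ⋂ k, ((C q \ V) \ (Ek k).1) := by
      rw [hEω, Set.diff_iUnion]
    rw [hint]
    have hdir : Directed (· ⊇ ·) fun k => (C q \ V) \ (Ek k).1 := by
      have hanti : Antitone fun k => (C q \ V) \ (Ek k).1 :=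
        fun k l hkl => Set.diff_subset_diff_right (hEk_mono hkl)
      exact hanti.directed_ge
    rw [Directed.measure_iInter (fun k => (((H.hmeas q).diff hV).diff (Ek k).2.1).nullMeasurableSet)
      hdir ⟨0, (lt_of_le_of_lt (measure_mono (Set.diff_subset.trans Set.diff_subset)) (H.hfin q)).ne⟩]
    exact le_iInf fun k => (Ek k).2.2.2.2 q hq
  have hAdmEω : Adm μ C f η' i V Eω := ⟨hEωmeas, hEωsub, hEωle, hEωcons⟩
  have hfinal : μ Eω = target := by
    by_contra hne
    have hltω : μ Eω < target := lt_of_le_of_ne hEωle hne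
    obtain ⟨E'', hadm'', hsub'', hlt''⟩ := adm_gain H hV hinv hAdmEω hltω
    have hτk : ∀ k, μ E'' ≤ τ (Ek k).1 := by
      intro k
      refine hτ_ge _ _ hadm'' ?_
      exact le_trans (Set.subset_iUnion (fun k => (Ek k).1) k) hsub''
    have hineq : ∀ k, μ (Ek k).1 + μ E'' ≤ 2 * μ Eω := by
      intro k
      calc μ (Ek k).1 + μ E'' ≤ μ (Ek k).1 + τ (Ek k).1 := add_le_add_right (hτk k) _
        _ ≤ 2 * μ (g (Ek k)).1 := hg2 (Ek k)
        _ = 2 * μ (Ek (k+1)).1 := by rw [hEk_succ k]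
        _ ≤ 2 * μ Eω := mul_le_mul' le_rfl (measure_mono (Set.subset_iUnion (fun k => (Ek k).1) (k+1)))
    have hsup : μ Eω + μ E'' ≤ 2 * μ Eω := by
      rw [hμEω, ENNReal.iSup_add, ← hμEω]
      exact iSup_le hineq
    have hEω_ne_top : μ Eω ≠ ⊤ := (lt_of_le_of_lt hEωle (lt_top_iff_ne_top.2 htarget_ne_top)).ne
    rw [two_mul] at hsup
    exact absurd (ENNReal.le_of_add_le_add_left hEω_ne_top hsup) hlt''.not_ge
  exact ⟨Eω, hEωmeas, hEωsub, fun _ => ⟨hfinal, hEωcons⟩⟩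

open Classical in
def sSet (H : Hyps μ C f η' Λ') (n : ℕ) (V : Set X) : Set X :=
  if h : ∃ i, f i = n then (step_exists H h.choose V).choose else ∅

def EE (H : Hyps μ C f η' Λ') : ℕ → Set X
  | n => sSet H n (⋃ m : Fin n, EE H m)
  termination_by n => n
  decreasing_by exact m.isLt

def Vs (H : Hyps μ C f η' Λ') (n : ℕ) : Set X := ⋃ m : Fin n, EE H m

lemma EE_eq (H : Hyps μ C f η' Λ') (n : ℕ) : EE H n = sSet H n (Vs H n) := by
  rw [EE]; rfl

lemma EE_meas (H : Hyps μ C f η' Λ') (n : ℕ) : MeasurableSet (EE H n) := by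
  classical
  rw [EE_eq, sSet]
  by_cases h : ∃ i, f i = n
  · rw [dif_pos h]
    exact (step_exists H h.choose (Vs H n)).choose_spec.1
  · rw [dif_neg h]; exact MeasurableSet.empty

lemma Vs_meas (H : Hyps μ C f η' Λ') (n : ℕ) : MeasurableSet (Vs H n) :=
  MeasurableSet.iUnion fun m => EE_meas H m

lemma EE_sub (H : Hyps μ C f η' Λ') {i : ι} {n : ℕ} (hfi : f i = n) :
    EE H n ⊆ C i \ Vs H n := by
  classical
  have h : ∃ j, f j = n := ⟨i, hfi⟩
  have hchoose : h.choose = i := H.hf (by rw [h.choose_spec, hfi])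
  subst hchoose
  rw [EE_eq, sSet, dif_pos h]
  exact (step_exists H h.choose (Vs H n)).choose_spec.2.1

lemma EE_empty (H : Hyps μ C f η' Λ') {n : ℕ} (h : ¬ ∃ i, f i = n) : EE H n = ∅ := by
  classical
  rw [EE_eq, sSet, dif_neg h]

lemma Vs_succ (H : Hyps μ C f η' Λ') (n : ℕ) : Vs H (n+1) = Vs H n ∪ EE H n := by
  ext x
  simp only [Vs, Set.mem_iUnion, Set.mem_union]
  constructor
  · rintro ⟨m, hm⟩
    rcases lt_or_eq_of_le (Nat.lt_succ_iff.1 m.isLt) with h | h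
    · exact Or.inl ⟨⟨m.1, h⟩, hm⟩
    · rw [h] at hm; exact Or.inr hm
  · rintro (⟨m, hm⟩ | hm)
    · exact ⟨⟨m.1, Nat.lt_succ_of_lt m.isLt⟩, hm⟩
    · exact ⟨⟨n, Nat.lt_succ_self n⟩, hm⟩

def INV (H : Hyps μ C f η' Λ') (n : ℕ) : Prop :=
  ∀ q, Rfun μ C f η' n q ≤ μ (C q \ Vs H n)

lemma inv_zero (H : Hyps μ C f η' Λ') : INV H 0 := by
  intro q
  have h0 : Vs H 0 = ∅ := by
    simp [Vs]
  rw [h0, Set.diff_empty]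
  exact Rfun_le H 0 q

lemma EE_spec (H : Hyps μ C f η' Λ') {i : ι} {n : ℕ} (hfi : f i = n) (hinv : INV H n) :
    μ (EE H n) = η' * μ (C i) ∧
      ∀ q, C q ⊆ C i → Rfun μ C f η' (n + 1) q ≤ μ ((C q \ Vs H n) \ EE H n) := by
  classical
  have h : ∃ j, f j = n := ⟨i, hfi⟩
  have hchoose : h.choose = i := H.hf (by rw [h.choose_spec, hfi])
  subst hchoose
  have heq : EE H n = (step_exists H h.choose (Vs H n)).choose := by
    rw [EE_eq, sSet, dif_pos h]
  have hsp := (step_exists H h.choose (Vs H n)).choose_spec.2.2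
  rw [← heq, hfi] at hsp
  exact hsp ⟨Vs_meas H n, hinv⟩

lemma inv_succ (H : Hyps μ C f η' Λ') (n : ℕ) (hinv : INV H n) : INV H (n+1) := by
  classical
  by_cases hex : ∃ i, f i = n
  · obtain ⟨i, hfi⟩ := hex
    obtain ⟨hμE, hcons⟩ := EE_spec H hfi hinv
    intro q
    rcases H.hdich q i with hqi | hiq | hdisj
    · -- C q ⊆ C i
      have := hcons q hqi
      rw [Vs_succ, ← Set.diff_diff]
      exact this
    · -- C i ⊆ C q
      have hsplit := Rfun_split H hfi hiq
      have h1 : μ (C q \ Vs H n) ≤ μ (C q \ Vs H (n+1)) + μ (EE H n) := by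
        rw [Vs_succ]
        refine le_trans (measure_mono ?_) (measure_union_le _ _)
        intro x hx
        by_cases hxe : x ∈ EE H n
        · exact Or.inr hxe
        · exact Or.inl ⟨hx.1, fun hc => (by cases hc with
            | inl h => exact hx.2 h
            | inr h => exact hxe h)⟩
      have h2 : Rfun μ C f η' n q ≤ μ (C q \ Vs H (n+1)) + η' * μ (C i) := by
        rw [hμE] at h1
        exact le_trans (hinv q) h1
      rw [hsplit, add_comm] at h2
      have hnetop : η' * μ (C i) ≠ ⊤ :=
        ENNReal.mul_ne_top H.hηt (H.hfin i).ne
      exact ENNReal.le_of_add_le_add_right hnetop h2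
    · -- disjoint
      have heq2 : C q \ Vs H (n+1) = C q \ Vs H n := by
        rw [Vs_succ]
        ext x
        simp only [Set.mem_diff, Set.mem_union]
        constructor
        · rintro ⟨hx, h2⟩
          exact ⟨hx, fun hc => h2 (Or.inl hc)⟩
        · rintro ⟨hx, h2⟩
          refine ⟨hx, fun hc => ?_⟩
          rcases hc with hc | hc
          · exact h2 hc
          · exact (Set.disjoint_left.1 hdisj hx) (EE_sub H hfi hc).1
      rw [heq2]
      exact le_trans (Rfun_mono (Nat.le_succ n) q) (hinv q)
  · intro q
    have hEe : EE H n = ∅ := EE_empty H hex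
    rw [Vs_succ, hEe, Set.union_empty]
    exact le_trans (Rfun_mono (Nat.le_succ n) q) (hinv q)

lemma inv_all (H : Hyps μ C f η' Λ') (n : ℕ) : INV H n := by
  induction n with
  | zero => exact inv_zero H
  | succ n ih => exact inv_succ H n ih

theorem abstract_sparse (H : Hyps μ C f η' Λ') :
    ∃ E : ι → Set X, (∀ i, MeasurableSet (E i)) ∧ (∀ i, E i ⊆ C i) ∧
      (∀ i j, i ≠ j → Disjoint (E i) (E j)) ∧ (∀ i, η' * μ (C i) ≤ μ (E i)) := by
  refine ⟨fun i => EE H (f i), fun i => EE_meas H (f i), ?_, ?_, ?_⟩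
  · intro i
    exact (EE_sub H rfl).trans Set.diff_subset
  · intro i j hij
    have hfij : f i ≠ f j := fun hc => hij (H.hf hc)
    rcases lt_or_gt_of_ne hfij with h | h
    · refine Set.disjoint_right.2 fun x hxj hxi => ?_
      have hsub := EE_sub H (rfl : f j = f j)
      have : x ∈ Vs H (f j) := Set.mem_iUnion.2 ⟨⟨f i, h⟩, hxi⟩
      exact (hsub hxj).2 this
    · refine Set.disjoint_left.2 fun x hxi hxj => ?_
      have hsub := EE_sub H (rfl : f i = f i)
      have : x ∈ Vs H (f i) := Set.mem_iUnion.2 ⟨⟨f j, h⟩, hxj⟩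
      exact (hsub hxi).2 this
  · intro i
    exact (EE_spec H rfl (inv_all H (f i))).1.ge

end SparseAbs

/-- A family `S` of standard dyadic cubes (given by parameters) is `η`-sparse if there are
pairwise disjoint measurable sets `E_Q ⊆ Q`, `Q ∈ S`, with `|E_Q| ≥ η |Q|`. -/
def IsSparse (d : ℕ) (η : ℝ) (S : Set (ℤ × (Fin d → ℤ))) : Prop :=
  ∃ E : {q // q ∈ S} → Set (Fin d → ℝ),
    (∀ q, MeasurableSet (E q)) ∧ (∀ q, E q ⊆ dCube d q.1) ∧
    (∀ q r, q ≠ r → Disjoint (E q) (E r)) ∧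
    (∀ q, ENNReal.ofReal η * volume (dCube d q.1) ≤ volume (E q))

/-- **Verbitsky; Lerner–Nazarov.** For `Λ > 1`, a family `S` of standard
dyadic cubes is `Λ`-Carleson (`∑_{P∈S, P⊆Q} |P| ≤ Λ|Q|` for every dyadic cube `Q`) if and
only if it is `(1/Λ)`-sparse. -/
theorem carleson_iff_sparse (d : ℕ) (hd : 1 ≤ d) (Λ : ℝ) (hΛ : 1 < Λ)
    (S : Set (ℤ × (Fin d → ℤ))) :
    (∀ q : ℤ × (Fin d → ℤ),
      ∑' r : {r // r ∈ S ∧ dCube d r ⊆ dCube d q}, volume (dCube d r.1)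
        ≤ ENNReal.ofReal Λ * volume (dCube d q))
    ↔ IsSparse d (1 / Λ) S := by
  have hΛ0 : (0:ℝ) < Λ := lt_trans one_pos hΛ
  constructor
  · -- hard direction
    intro hCar
    obtain ⟨f, hf⟩ := Countable.exists_injective_nat {q // q ∈ S}
    set C : {q // q ∈ S} → Set (Fin d → ℝ) := fun q => dCube d q.1 with hC
    have H : SparseAbs.Hyps (volume : Measure (Fin d → ℝ)) C f
        (ENNReal.ofReal (1/Λ)) (ENNReal.ofReal Λ) := by
      refine ⟨hf, fun i => DyadicAux.measurableSet_dyadicCube _ _,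
        fun i => DyadicAux.volume_dCube_lt_top _,
        fun p q => DyadicAux.dCube_dichotomy _ _,
        ENNReal.ofReal_ne_top, ENNReal.ofReal_ne_top, ?_, ?_, ?_⟩
      · rw [← ENNReal.ofReal_mul (by positivity : (0:ℝ) ≤ 1/Λ),
          one_div_mul_cancel hΛ0.ne', ENNReal.ofReal_one]
      · intro q
        have heq : (∑' p : {p : {q // q ∈ S} | C p ⊆ C q}, volume (C p.1))
            = ∑' r : {r // r ∈ S ∧ dCube d r ⊆ dCube d q.1}, volume (dCube d r.1) :=
          Equiv.tsum_eq
            ({ toFun := fun p => ⟨p.1.1, p.1.2, p.2⟩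
               invFun := fun r => ⟨⟨r.1, r.2.1⟩, r.2.2⟩
               left_inv := fun p => rfl
               right_inv := fun r => rfl } :
              {p : {q // q ∈ S} | C p ⊆ C q} ≃ {r // r ∈ S ∧ dCube d r ⊆ dCube d q.1})
            (fun r => volume (dCube d r.1))
        rw [heq]
        exact hCar q.1
      · intro A hA h0 ε hε
        exact DyadicAux.exists_small_subset hd A hA h0 ε hε
    obtain ⟨E, h1, h2, h3, h4⟩ := SparseAbs.abstract_sparse H
    exact ⟨E, h1, h2, h3, h4⟩
  · -- easy direction
    rintro ⟨E, hEmeas, hEsub, hEdisj, hEvol⟩ q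
    set T := {r // r ∈ S ∧ dCube d r ⊆ dCube d q} with hT
    set E' : T → Set (Fin d → ℝ) := fun r => E ⟨r.1, r.2.1⟩ with hE'
    have hkey : ∀ r : T, volume (dCube d r.1) ≤ ENNReal.ofReal Λ * volume (E' r) := by
      intro r
      have h1 := hEvol ⟨r.1, r.2.1⟩
      calc volume (dCube d r.1)
          = ENNReal.ofReal Λ * (ENNReal.ofReal (1/Λ) * volume (dCube d r.1)) := by
            rw [← mul_assoc, ← ENNReal.ofReal_mul hΛ0.le, mul_one_div_cancel hΛ0.ne',
              ENNReal.ofReal_one, one_mul]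
        _ ≤ ENNReal.ofReal Λ * volume (E' r) := mul_le_mul' le_rfl h1
    have hdisj' : Pairwise (Function.onFun Disjoint E') := by
      intro r s hrs
      refine hEdisj _ _ (fun hc => hrs ?_)
      have h2 := congrArg Subtype.val hc
      simp only at h2
      exact Subtype.ext h2
    have hiU : volume (⋃ r : T, E' r) = ∑' r : T, volume (E' r) :=
      measure_iUnion hdisj' (fun r => hEmeas _)
    calc (∑' r : T, volume (dCube d r.1))
        ≤ ∑' r : T, ENNReal.ofReal Λ * volume (E' r) := ENNReal.tsum_le_tsum hkey
      _ = ENNReal.ofReal Λ * ∑' r : T, volume (E' r) := ENNReal.tsum_mul_left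
      _ = ENNReal.ofReal Λ * volume (⋃ r : T, E' r) := by rw [hiU]
      _ ≤ ENNReal.ofReal Λ * volume (dCube d q) := by
          refine mul_le_mul' le_rfl (measure_mono ?_)
          refine Set.iUnion_subset fun r => ?_
          exact (hEsub ⟨r.1, r.2.1⟩).trans r.2.2

end
end
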